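/- Let 0 < β < α be coprime integers, r ≥ 1 an integer, and u_1,…,u_r integers with u_k ≥ 2 for all k. Define sequences p_0 = 1, p_1 = u_1, p_{k+1} = u_{k+1}·p_k − p_{k−1} and q_0 = 0, q_1 = 1, q_{k+1} = u_{k+1}·q_k − q_{k−1}, and assume p_r = α and q_r = β (i.e. α/β = cf[u_1,…,u_r] is the negative continued fraction expansion). Then for every integer l ≥ 2: l ∈ {p_1,…,p_r} if and only if {j·β/α} + {(l−j)·β/α} − {l·β/α} = 1 for every integer j with 1 ≤ j ≤ l−1. -/

import Mathlib

/-- Numerators `p_k` of the convergents of the negative continued fraction `cf[u_1,…]`: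
`p_0 = 1`, `p_1 = u_1`, `p_{k+1} = u_{k+1}·p_k − p_{k−1}` (here `u k` stands for `u_{k+1}`). -/
def cfP (u : ℕ → ℤ) : ℕ → ℤ
  | 0 => 1
  | 1 => u 0
  | k + 2 => u (k + 1) * cfP u (k + 1) - cfP u k

/-- Denominators `q_k` of the convergents: `q_0 = 0`, `q_1 = 1`,
`q_{k+1} = u_{k+1}·q_k − q_{k−1}`. -/
def cfQ (u : ℕ → ℤ) : ℕ → ℤ
  | 0 => 0
  | 1 => 1
  | k + 2 => u (k + 1) * cfQ u (k + 1) - cfQ u k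

lemma cf_det (u : ℕ → ℤ) : ∀ k, cfP u k * cfQ u (k+1) - cfP u (k+1) * cfQ u k = 1 := by
  intro k
  induction k with
  | zero => simp [cfP, cfQ]
  | succ n ih =>
    have e1 : cfP u (n+2) = u (n+1) * cfP u (n+1) - cfP u n := rfl
    have e2 : cfQ u (n+2) = u (n+1) * cfQ u (n+1) - cfQ u n := rfl
    rw [e1, e2]; linear_combination ih

lemma cf_mono (u : ℕ → ℤ) (r : ℕ) (hu : ∀ k < r, 2 ≤ u k) :
    ∀ k ≤ r, 1 ≤ cfP u k ∧ (k < r → cfP u k < cfP u (k+1)) := by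
  intro k
  induction k with
  | zero =>
    intro _
    refine ⟨le_refl 1, fun h0 => ?_⟩
    have : cfP u 1 = u 0 := rfl
    have := hu 0 h0
    simp [cfP]; linarith [hu 0 h0]
  | succ n ih =>
    intro h
    obtain ⟨h1, h2⟩ := ih (by omega)
    have h3 := h2 (by omega)
    refine ⟨by linarith, fun hlt => ?_⟩
    have hu2 := hu (n+1) hlt
    have e1 : cfP u (n+2) = u (n+1) * cfP u (n+1) - cfP u n := rfl
    rw [e1]; nlinarith

lemma fract_int_div (a α : ℤ) (hα : 0 < α) :
    Int.fract ((a : ℚ) / (α : ℚ)) = ((a % α : ℤ) : ℚ) / (α : ℚ) := by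
  have hd : a = α * (a / α) + a % α := (Int.mul_ediv_add_emod a α).symm
  have hαQ : (0:ℚ) < (α:ℚ) := by exact_mod_cast hα
  have h0 : (0:ℤ) ≤ a % α := Int.emod_nonneg a (by omega)
  have h1 : a % α < α := Int.emod_lt_of_pos a hα
  rw [show ((a:ℚ)) = ((α * (a / α) + a % α : ℤ) : ℚ) by exact_mod_cast congrArg (fun z : ℤ => (z:ℚ)) hd]
  push_cast
  rw [add_div, mul_comm, mul_div_assoc, div_self (ne_of_gt hαQ), mul_one,
    Int.fract_intCast_add]
  apply Int.fract_eq_self.2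
  constructor
  · positivity
  · rw [div_lt_one hαQ]; exact_mod_cast h1

lemma keylem (P0 P1 T0 T1 a b m ρ : ℤ) (hp1 : 1 ≤ P0) (hp2 : P0 < P1)
    (ht1 : T1 < T0) (ht2 : 0 ≤ T1) (key1 : a * P0 + b * P1 = m)
    (key2 : a * T0 + b * T1 = ρ) (hm1 : 1 ≤ m) (hm2 : m < P1) (hρ0 : 0 ≤ ρ) :
    T0 ≤ ρ := by
  rcases le_or_gt 1 b with hb | hb
  · exfalso
    have h1 : a * P0 + (b - 1) * P1 ≤ -1 := by linarith
    have h2 : (b - 1) * P0 ≤ (b - 1) * P1 :=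
      mul_le_mul_of_nonneg_left (le_of_lt hp2) (by linarith)
    have h3 : (a + b - 1) * P0 ≤ -1 := by nlinarith
    have h4 : a + b ≤ 0 := by nlinarith [h3, hp1]
    have h5 : a ≤ -b := by linarith
    have h6 : a * T0 ≤ (-b) * T0 := mul_le_mul_of_nonneg_right h5 (by linarith)
    have h7 : b * T1 ≤ b * (T0 - 1) := mul_le_mul_of_nonneg_left (by linarith) (by linarith)
    linarith
  · have hb' : b ≤ 0 := by linarith
    have h2 : b * P1 ≤ b * P0 := mul_le_mul_of_nonpos_left (le_of_lt hp2) hb'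
    have h3 : 1 ≤ (a + b) * P0 := by nlinarith
    have h4 : 1 ≤ a + b := by nlinarith [h3, hp1]
    have h5 : -b ≤ a - 1 := by linarith
    have h6 : (-b) * T1 ≤ (-b) * T0 := mul_le_mul_of_nonneg_left (le_of_lt ht1) (by linarith)
    have h7 : (-b) * T0 ≤ (a - 1) * T0 := mul_le_mul_of_nonneg_right h5 (by linarith)
    linarith

/-- Let `0 < β < α` be coprime with negative continued fraction expansion
`α/β = cf[u_1,…,u_r]` (all `u_k ≥ 2`). Then for every integer `l ≥ 2`:
`l ∈ {p_1,…,p_r}` iff `{j·β/α} + {(l−j)·β/α} − {l·β/α} = 1` for all `1 ≤ j ≤ l−1`. -/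
theorem stmt16 (α β : ℤ) (hβ : 0 < β) (hβα : β < α) (hcop : Int.gcd α β = 1)
    (r : ℕ) (hr : 1 ≤ r) (u : ℕ → ℤ) (hu : ∀ k < r, 2 ≤ u k)
    (hP : cfP u r = α) (hQ : cfQ u r = β)
    (l : ℤ) (hl : 2 ≤ l) :
    (∃ k : ℕ, 1 ≤ k ∧ k ≤ r ∧ cfP u k = l) ↔
      (∀ j : ℤ, 1 ≤ j → j ≤ l - 1 →
        Int.fract (((j * β : ℤ) : ℚ) / (α : ℚ)) +
          Int.fract ((((l - j) * β : ℤ) : ℚ) / (α : ℚ)) -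
          Int.fract (((l * β : ℤ) : ℚ) / (α : ℚ)) = 1) := by
  have hα : 0 < α := lt_trans hβ hβα
  set t : ℕ → ℤ := fun k => cfP u k * β - cfQ u k * α with ht
  have mono := cf_mono u r hu
  -- decreasing chain of t, by downward induction
  have tchain : ∀ d ≤ r, 0 ≤ t (r - d) ∧ (1 ≤ d → t (r - d + 1) < t (r - d)) := by
    intro d
    induction d with
    | zero =>
      intro _
      constructor
      · simp only [ht, Nat.sub_zero, hP, hQ]; ring_nf; exact le_refl 0
      · omega
    | succ n ih =>
      intro hd
      have hr1 : t r = 0 := by simp only [ht, hP, hQ]; ring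
      rcases Nat.eq_zero_or_pos n with hn0 | hn1
      · subst hn0
        have hdet := cf_det u (r - 1)
        have e1 : r - 1 + 1 = r := by omega
        rw [e1] at hdet
        have hval : t (r - 1) = 1 := by
          simp only [ht]
          rw [← hP, ← hQ]
          linear_combination hdet
        rw [e1, hval, hr1]
        exact ⟨by norm_num, fun _ => by norm_num⟩
      · obtain ⟨h0, h1⟩ := ih (by omega)
        have h2 := h1 hn1
        -- recurrence at k = r - n - 1
        have e1 : r - n - 1 + 1 = r - n := by omega
        have e2 : r - n - 1 + 2 = r - n + 1 := by omega
        have erec : t (r - n + 1) = u (r - n) * t (r - n) - t (r - n - 1) := by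
          have p1 : cfP u (r - n - 1 + 2) = u (r - n - 1 + 1) * cfP u (r - n - 1 + 1) - cfP u (r - n - 1) := rfl
          have q1 : cfQ u (r - n - 1 + 2) = u (r - n - 1 + 1) * cfQ u (r - n - 1 + 1) - cfQ u (r - n - 1) := rfl
          rw [e1, e2] at p1 q1
          simp only [ht]
          rw [p1, q1]; ring
        have hu2 : 2 ≤ u (r - n) := hu (r - n) (by omega)
        have hlt : t (r - n - 1) > t (r - n) := by nlinarith
        have e3 : r - (n + 1) = r - n - 1 := by omega
        rw [e3, e1]
        exact ⟨by linarith, fun _ => hlt⟩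
  have tprop : ∀ k ≤ r, 0 ≤ t k ∧ (k < r → t (k+1) < t k) := by
    intro k hk
    have h := tchain (r - k) (by omega)
    rw [show r - (r - k) = k by omega] at h
    exact ⟨h.1, fun hlt => h.2 (by omega)⟩
  have tle : ∀ k ≤ r, t k ≤ β := by
    intro k
    induction k with
    | zero => intro _; simp [ht, cfP, cfQ]
    | succ n ih =>
      intro h
      have := (tprop n (by omega)).2 (by omega)
      have := ih (by omega)
      linarith
  have rhop : ∀ k ≤ r, (cfP u k * β) % α = t k := by
    intro k hk
    have h0 := (tprop k hk).1
    have h1 : t k < α := lt_of_le_of_lt (tle k hk) hβα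
    have e : cfP u k * β = t k + cfQ u k * α := by simp only [ht]; ring
    rw [e, Int.add_mul_emod_self_right, Int.emod_eq_of_lt h0 h1]
  -- Claim B
  have claimB : ∀ k < r, ∀ m : ℤ, 1 ≤ m → m < cfP u (k+1) → t k ≤ (m * β) % α := by
    intro k hk m hm1 hm2
    set ρ := (m * β) % α with hρdef
    have hρ0 : 0 ≤ ρ := Int.emod_nonneg _ (by omega)
    set n := (m * β) / α with hndef
    have hmn : m * β = α * n + ρ := (Int.mul_ediv_add_emod (m*β) α).symm
    set a := m * cfQ u (k+1) - n * cfP u (k+1) with hadef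
    set b := n * cfP u k - m * cfQ u k with hbdef
    have hdet := cf_det u k
    have key1 : a * cfP u k + b * cfP u (k+1) = m := by
      simp only [hadef, hbdef]; linear_combination m * hdet
    have key2 : a * t k + b * t (k+1) = ρ := by
      simp only [hadef, hbdef, ht]
      linear_combination (m * β - n * α) * hdet + hmn
    obtain ⟨hp1, hp2⟩ := mono k (by omega)
    have hp2 := hp2 hk
    obtain ⟨ht0, ht1⟩ := tprop k (by omega)
    have ht1 := ht1 hk
    have ht2 : 0 ≤ t (k+1) := (tprop (k+1) (by omega)).1
    exact keylem (cfP u k) (cfP u (k+1)) (t k) (t (k+1)) a b m ρ hp1 hp2 ht1 ht2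
      key1 key2 hm1 hm2 hρ0
  -- core equivalence for each j
  have core : ∀ j : ℤ, 1 ≤ j → j ≤ l - 1 →
      ((Int.fract (((j * β : ℤ) : ℚ) / (α : ℚ)) +
          Int.fract ((((l - j) * β : ℤ) : ℚ) / (α : ℚ)) -
          Int.fract (((l * β : ℤ) : ℚ) / (α : ℚ)) = 1) ↔
        (l * β) % α < (j * β) % α) := by
    intro j hj1 hj2
    have hαne : α ≠ 0 := by omega
    rw [fract_int_div _ _ hα, fract_int_div _ _ hα, fract_int_div _ _ hα]
    have hαQ : ((α : ℚ)) ≠ 0 := by exact_mod_cast hαne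
    rw [← add_div, ← sub_div, div_eq_one_iff_eq hαQ]
    set x := (j * β) % α with hx
    set y := ((l - j) * β) % α with hy
    set z := (l * β) % α with hz
    have hx0 : 0 ≤ x := Int.emod_nonneg _ hαne
    have hy0 : 0 ≤ y := Int.emod_nonneg _ hαne
    have hz0 : 0 ≤ z := Int.emod_nonneg _ hαne
    have hx1 : x < α := Int.emod_lt_of_pos _ hα
    have hy1 : y < α := Int.emod_lt_of_pos _ hα
    have hz1 : z < α := Int.emod_lt_of_pos _ hα
    have hdvd : α ∣ x + y - z := by
      have h1 : (x + y) % α = (j * β + (l - j) * β) % α := (Int.add_emod _ _ _).symm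
      have h2 : j * β + (l - j) * β = l * β := by ring
      have h3 : (x + y) % α = z % α := by
        rw [h1, h2, hz, Int.emod_emod_of_dvd _ dvd_rfl]
      have h4 : x + y ≡ z [ZMOD α] := h3
      have h5 := Int.ModEq.dvd h4.symm
      simpa using h5
    constructor
    · intro h
      have h' : x + y - z = α := by exact_mod_cast h
      linarith
    · intro h
      obtain ⟨c, hc⟩ := hdvd
      have hpos : 0 < x + y - z := by linarith
      have h2α : x + y - z < 2 * α := by linarith
      have hc1 : 0 < c := by
        have hmul : α * 0 < α * c := by linarith [hc]
        exact lt_of_mul_lt_mul_left hmul (le_of_lt hα)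
      have hc2 : c < 2 := by
        have hmul : α * c < α * 2 := by linarith [hc]
        exact lt_of_mul_lt_mul_left hmul (le_of_lt hα)
      have hc3 : c = 1 := by omega
      rw [hc3, mul_one] at hc
      have h' : x + y - z = α := hc
      exact_mod_cast h'
  constructor
  · rintro ⟨k, hk1, hk2, hpk⟩
    intro j hj1 hj2
    rw [core j hj1 hj2]
    have hz : (l * β) % α = t k := by rw [← hpk]; exact rhop k hk2
    have ek : k - 1 + 1 = k := by omega
    have hx : t (k-1) ≤ (j * β) % α := by
      apply claimB (k-1) (by omega) j hj1
      rw [ek, hpk]; omega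
    have : t k < t (k-1) := by
      have := (tprop (k-1) (by omega)).2 (by omega)
      rwa [ek] at this
    omega
  · intro H
    -- l ≤ α
    have hlα : l ≤ α := by
      by_contra hc
      push_neg at hc
      have hj1 : (1:ℤ) ≤ l - α := by omega
      have hj2 : l - α ≤ l - 1 := by omega
      have := (core (l - α) hj1 hj2).1 (H (l - α) hj1 hj2)
      rw [show (l - α) * β = l * β + α * (-β) by ring, Int.add_mul_emod_self_left] at this
      omega
    -- find k with p k < l ≤ p (k+1)
    have hfind : ∀ n ≤ r, l ≤ cfP u n → ∃ k, k < r ∧ cfP u k < l ∧ l ≤ cfP u (k+1) := by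
      intro n
      induction n with
      | zero =>
        intro _ hln
        exfalso
        have : cfP u 0 = 1 := rfl
        omega
      | succ n ih =>
        intro hn hln
        by_cases hcase : l ≤ cfP u n
        · exact ih (by omega) hcase
        · exact ⟨n, by omega, by omega, hln⟩
    obtain ⟨k, hkr, hk1, hk2⟩ := hfind r le_rfl (by omega)
    have : l = cfP u (k+1) := by
      by_contra hne
      have hlt : l < cfP u (k+1) := by omega
      have hB := claimB k hkr l (by omega) hlt
      have hj1 : (1:ℤ) ≤ cfP u k := (mono k (by omega)).1
      have hj2 : cfP u k ≤ l - 1 := by omega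
      have := (core (cfP u k) hj1 hj2).1 (H (cfP u k) hj1 hj2)
      rw [rhop k (by omega)] at this
      omega
    exact ⟨k+1, by omega, by omega, this.symm⟩
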